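/- Let φ: X' → X be an étale morphism of smooth varieties over a field K of characteristic zero and let I be a sheaf of ideals on X. Then the pullback of the derivative ideal equals the derivative ideal of the pullback: φ*(D(I)) = D(φ*(I)). -/

import Mathlib

/-- The first derivative ideal of `I` relative to `K`: generated by `I` together with
`d f` for all `K`-derivations `d` and `f ∈ I`. -/
noncomputable def derivationIdeal (K : Type*) {R : Type*} [CommRing K] [CommRing R]
    [Algebra K R] (I : Ideal R) : Ideal R :=
  I ⊔ Ideal.span {g | ∃ f ∈ I, ∃ d : Derivation K R R, g = d f}

universe u

open TrivSqZeroExt in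
/-- Derivations extend along formally smooth maps. -/
theorem exists_derivation_extension {K R S : Type u} [CommRing K] [CommRing R] [CommRing S]
    [Algebra K R] [Algebra K S] [Algebra R S] [IsScalarTower K R S]
    [Algebra.FormallySmooth R S] (d : Derivation K R R) :
    ∃ d' : Derivation K S S, ∀ r, d' (algebraMap R S r) = algebraMap R S (d r) := by
  classical
  let T := TrivSqZeroExt S S
  have fstP : ∀ r : R, fst (inl (algebraMap R S r) + inr (algebraMap R S (d r)) : T)
      = algebraMap R S r := fun r => by rw [fst_add, fst_inl, fst_inr, add_zero]
  have sndP : ∀ r : R, snd (inl (algebraMap R S r) + inr (algebraMap R S (d r)) : T)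
      = algebraMap R S (d r) := fun r => by rw [snd_add, snd_inl, snd_inr, zero_add]
  let ψ : R →+* T :=
  { toFun := fun r => inl (algebraMap R S r) + inr (algebraMap R S (d r))
    map_one' := by
      refine TrivSqZeroExt.ext ?_ ?_
      · rw [fstP, map_one, fst_one]
      · rw [sndP, Derivation.map_one_eq_zero, map_zero, snd_one]
    map_mul' := fun a b => by
      refine TrivSqZeroExt.ext ?_ ?_
      · rw [fstP, fst_mul, fstP, fstP, map_mul]
      · rw [sndP, snd_mul, fstP, fstP, sndP, sndP, op_smul_eq_smul, smul_eq_mul, smul_eq_mul,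
          Derivation.leibniz, map_add, smul_eq_mul, smul_eq_mul, map_mul, map_mul]
    map_zero' := by
      refine TrivSqZeroExt.ext ?_ ?_
      · rw [fstP, map_zero, fst_zero]
      · rw [sndP, map_zero, map_zero, snd_zero]
    map_add' := fun a b => by
      refine TrivSqZeroExt.ext ?_ ?_
      · rw [fstP, fst_add, fstP, fstP, map_add]
      · rw [sndP, snd_add, sndP, sndP, map_add, map_add] }
  have hψfst : ∀ r, fst (ψ r) = algebraMap R S r := fun r => fstP r
  have hψsnd : ∀ r, snd (ψ r) = algebraMap R S (d r) := fun r => sndP r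
  letI : Algebra R T := ψ.toAlgebra
  let I : Ideal T := RingHom.ker (fstHom S S S)
  have hmem : ∀ x : T, x ∈ I ↔ fst x = 0 := fun x => Iff.rfl
  have hI : I ^ 2 = ⊥ := by
    refine eq_bot_iff.mpr ?_
    rw [pow_two]
    refine Ideal.mul_le.mpr fun x hx y hy => ?_
    rw [Ideal.mem_bot]
    refine TrivSqZeroExt.ext ?_ ?_
    · rw [fst_mul, (hmem x).mp hx, zero_mul, fst_zero]
    · rw [snd_mul, (hmem x).mp hx, (hmem y).mp hy, snd_zero]
      simp
  let g : S →ₐ[R] T ⧸ I :=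
  { toRingHom := (Ideal.Quotient.mk I).comp (inlHom S S)
    commutes' := fun r => by
      have h1 : algebraMap R (T ⧸ I) r = Ideal.Quotient.mk I (ψ r) := rfl
      show Ideal.Quotient.mk I (inl (algebraMap R S r)) = algebraMap R (T ⧸ I) r
      rw [h1, Ideal.Quotient.mk_eq_mk_iff_sub_mem]
      rw [hmem, fst_sub, fst_inl, hψfst, sub_self] }
  let σ : S →ₐ[R] T := Algebra.FormallySmooth.lift I ⟨2, hI⟩ g
  have hσmk : ∀ s : S, Ideal.Quotient.mk I (σ s) = Ideal.Quotient.mk I (inl s) := fun s =>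
    Algebra.FormallySmooth.mk_lift I ⟨2, hI⟩ g s
  have hfst : ∀ s : S, fst (σ s) = s := by
    intro s
    have h2 : σ s - inl s ∈ I := (Ideal.Quotient.mk_eq_mk_iff_sub_mem _ _).mp (hσmk s)
    have h3 := (hmem _).mp h2
    rw [fst_sub, fst_inl, sub_eq_zero] at h3
    exact h3
  have hψ : ∀ r : R, σ (algebraMap R S r) = ψ r := fun r => σ.commutes r
  refine ⟨{ toFun := fun s => snd (σ s)
            map_add' := fun a b => by
              show snd (σ (a + b)) = snd (σ a) + snd (σ b)
              rw [map_add, snd_add]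
            map_smul' := fun k a => by
              have h3 : σ (k • a) = inl (algebraMap K S k) * σ a := by
                rw [Algebra.smul_def, map_mul, IsScalarTower.algebraMap_apply K R S, hψ]
                congr 1
                refine TrivSqZeroExt.ext ?_ ?_
                · rw [hψfst, fst_inl, ← IsScalarTower.algebraMap_apply]
                · rw [hψsnd, snd_inl, Derivation.map_algebraMap, map_zero]
              show snd (σ (k • a)) = RingHom.id K k • snd (σ a)
              rw [h3, snd_mul, fst_inl, snd_inl]
              simp [Algebra.smul_def]
            map_one_eq_zero' := by
              show snd (σ 1) = 0
              rw [map_one, snd_one]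
            leibniz' := fun a b => by
              show snd (σ (a * b)) = a • snd (σ b) + b • snd (σ a)
              rw [map_mul, snd_mul, hfst, hfst, op_smul_eq_smul] }, ?_⟩
  intro r
  show snd (σ (algebraMap R S r)) = algebraMap R S (d r)
  rw [hψ, hψsnd]

open KaehlerDifferential in
/-- If `Ω[R⁄K]` is projective, the derivative (by any `K`-derivation of `S`) of the image of
an element of `I` lies in the pullback of the derivation ideal. -/
theorem deriv_algebraMap_mem {K R S : Type*} [CommRing K] [CommRing R] [CommRing S]
    [Algebra K R] [Algebra K S] [Algebra R S] [IsScalarTower K R S]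
    [Module.Projective R (Ω[R⁄K])] (I : Ideal R) (d : Derivation K S S)
    {r : R} (hr : r ∈ I) :
    d (algebraMap R S r) ∈ Ideal.map (algebraMap R S) (derivationIdeal K I) := by
  classical
  haveI : SMulCommClass K R S :=
    ⟨fun k r s => by simp only [Algebra.smul_def]; ring⟩
  obtain ⟨s, hs⟩ := Module.projective_def'.mp ‹Module.Projective R (Ω[R⁄K])›
  let F : Ω[R⁄K] →ₗ[R] S :=
    (d.liftKaehlerDifferential.restrictScalars R) ∘ₗ (KaehlerDifferential.map K K R S)
  set ω := KaehlerDifferential.D K R r with hωdef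
  have hF : d (algebraMap R S r) = F ω := by
    simp only [F, LinearMap.comp_apply, LinearMap.coe_restrictScalars, hωdef,
      KaehlerDifferential.map_D, Derivation.liftKaehlerDifferential_comp_D]
  have key : F ω = (s ω).sum fun x c => algebraMap R S c * F x := by
    conv_lhs => rw [show ω = Finsupp.linearCombination R id (s ω) from
      (LinearMap.congr_fun hs ω).symm]
    rw [Finsupp.linearCombination_apply, map_finsuppSum]
    exact Finsupp.sum_congr fun x _ => by rw [id_eq, map_smul, Algebra.smul_def]
  rw [hF, key, Finsupp.sum]
  refine Submodule.sum_mem _ fun x _ => ?_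
  have hc : (s ω) x ∈ derivationIdeal K I := by
    refine Ideal.mem_sup_right (Ideal.subset_span ?_)
    exact ⟨r, hr, ((Finsupp.lapply x).comp s).compDer (KaehlerDifferential.D K R), rfl⟩
  exact Ideal.mul_mem_right _ _ (Ideal.mem_map_of_mem _ hc)

/-- For an étale morphism `φ : X' → X` of smooth varieties over a field `K` of
characteristic zero (affine model: `S` an étale algebra over `R`, both smooth over `K`)
and an ideal `I` of `R`, the pullback of the derivative ideal equals the derivative
ideal of the pullback: `φ*(D(I)) = D(φ*(I))`. -/
theorem stmt_5 {K R S : Type u} [Field K] [CharZero K] [CommRing R] [CommRing S]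
    [Algebra K R] [Algebra K S] [Algebra R S] [IsScalarTower K R S]
    [Algebra.Smooth K R] [Algebra.Smooth K S] [Algebra.Etale R S]
    (I : Ideal R) :
    Ideal.map (algebraMap R S) (derivationIdeal K I)
      = derivationIdeal K (Ideal.map (algebraMap R S) I) := by
  apply le_antisymm
  · rw [Ideal.map_le_iff_le_comap]
    refine sup_le ?_ ?_
    · intro f hf
      exact Ideal.mem_comap.mpr
        (Ideal.mem_sup_left (Ideal.mem_map_of_mem _ hf))
    · rw [Ideal.span_le]
      rintro g ⟨f, hf, d, rfl⟩
      obtain ⟨d', hd'⟩ := exists_derivation_extension (S := S) d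
      refine Ideal.mem_comap.mpr (Ideal.mem_sup_right (Ideal.subset_span ?_))
      exact ⟨algebraMap R S f, Ideal.mem_map_of_mem _ hf, d', (hd' f).symm⟩
  · refine sup_le (Ideal.map_mono le_sup_left) ?_
    rw [Ideal.span_le]
    rintro g ⟨f, hf, d, rfl⟩
    rw [Ideal.map] at hf
    refine Submodule.span_induction ?_ ?_ ?_ ?_ hf
    · rintro y ⟨f₀, hf₀, rfl⟩
      exact deriv_algebraMap_mem I d hf₀
    · simp
    · intro a b _ _ ha hb
      rw [map_add]
      exact add_mem ha hb
    · intro a x hx hdx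
      rw [smul_eq_mul, Derivation.leibniz, smul_eq_mul, smul_eq_mul]
      refine add_mem (Ideal.mul_mem_left _ _ hdx) ?_
      have hx' : x ∈ Ideal.map (algebraMap R S) (derivationIdeal K I) :=
        Ideal.map_mono (le_sup_left : I ≤ derivationIdeal K I) (by rw [Ideal.map]; exact hx)
      exact Ideal.mul_mem_right _ _ hx'
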